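/- Let R be a commutative ring, G a totally reflexive R-module, and I an injective R-module. Then Hom_R(G, I) is a Gorenstein injective R-module. -/

import Mathlib

universe u

open TensorProduct

/-- A `ℤ`-indexed chain complex of `R`-modules: modules `X i` with
differentials `d i : X (i+1) →ₗ[R] X i` satisfying `d ∘ d = 0`. -/
structure ModComplex (R : Type u) [CommRing R] : Type (u + 1) where
  X : ℤ → Type u
  [addCommGroup : ∀ i, AddCommGroup (X i)]
  [module : ∀ i, Module R (X i)]
  d : ∀ i : ℤ, X (i + 1) →ₗ[R] X i
  dd : ∀ i : ℤ, (d i).comp (d (i + 1)) = 0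

attribute [instance] ModComplex.addCommGroup ModComplex.module

namespace ModComplex

variable {R : Type u} [CommRing R] (L : ModComplex R)

/-- The complex is acyclic: exact at every spot. -/
def Acyclic : Prop := ∀ i : ℤ, Function.Exact (L.d (i + 1)) (L.d i)

/-- The complex `Hom_R(L, N)` is acyclic. -/
def HomAcyclic (N : Type u) [AddCommGroup N] [Module R N] : Prop :=
  ∀ i : ℤ, Function.Exact
    (fun φ : L.X i →ₗ[R] N => φ.comp (L.d i))
    (fun φ : L.X (i + 1) →ₗ[R] N => φ.comp (L.d (i + 1)))

/-- The complex `Hom_R(E, L)` is acyclic. -/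
def CoHomAcyclic (E : Type u) [AddCommGroup E] [Module R E] : Prop :=
  ∀ i : ℤ, Function.Exact
    (fun φ : E →ₗ[R] L.X (i + 1 + 1) => (L.d (i + 1)).comp φ)
    (fun φ : E →ₗ[R] L.X (i + 1) => (L.d i).comp φ)

/-- The complex `E ⊗_R L` is acyclic. -/
def TensorAcyclic (E : Type u) [AddCommGroup E] [Module R E] : Prop :=
  ∀ i : ℤ, Function.Exact
    (LinearMap.lTensor E (L.d (i + 1)))
    (LinearMap.lTensor E (L.d i))

/-- The complex consists of finitely generated projective modules. -/
def FGProj : Prop :=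
  ∀ i : ℤ, Module.Finite R (L.X i) ∧ Module.Projective R (L.X i)

/-- A totally acyclic complex: an acyclic complex of finitely generated
projective modules such that `Hom_R(L, R)` is acyclic. -/
def TotallyAcyclic : Prop := L.Acyclic ∧ L.FGProj ∧ L.HomAcyclic R

end ModComplex

/-- `M` is (isomorphic to) the cokernel of the differential `d 0 : X 1 → X 0`. -/
def IsCokerOf {R : Type u} [CommRing R] (L : ModComplex R)
    (M : Type u) [AddCommGroup M] [Module R M] : Prop :=
  ∃ f : L.X 0 →ₗ[R] M, Function.Surjective f ∧ LinearMap.ker f = LinearMap.range (L.d 0)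

/-- `M` is (isomorphic to) the kernel of the differential `d 0 : X 1 → X 0`. -/
def IsKerOf {R : Type u} [CommRing R] (L : ModComplex R)
    (M : Type u) [AddCommGroup M] [Module R M] : Prop :=
  ∃ f : M →ₗ[R] L.X 1, Function.Injective f ∧ LinearMap.range f = LinearMap.ker (L.d 0)

/-- `M` is totally reflexive: it is a cokernel of a differential in a totally
acyclic complex of finitely generated projective modules. -/
def IsTotallyReflexive (R : Type u) [CommRing R]
    (M : Type u) [AddCommGroup M] [Module R M] : Prop :=
  ∃ L : ModComplex R, L.TotallyAcyclic ∧ IsCokerOf L M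

/-- Gorenstein projective module. -/
def IsGorensteinProjective (R : Type u) [CommRing R]
    (A : Type u) [AddCommGroup A] [Module R A] : Prop :=
  ∃ L : ModComplex R, L.Acyclic ∧ (∀ i, Module.Projective R (L.X i)) ∧
    (∀ (Q : Type u) [AddCommGroup Q] [Module R Q],
      Module.Projective R Q → L.HomAcyclic Q) ∧
    IsCokerOf L A

/-- Gorenstein injective module. -/
def IsGorensteinInjective (R : Type u) [CommRing R]
    (B : Type u) [AddCommGroup B] [Module R B] : Prop :=
  ∃ L : ModComplex R, L.Acyclic ∧ (∀ i, Module.Injective R (L.X i)) ∧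
    (∀ (E : Type u) [AddCommGroup E] [Module R E],
      Module.Injective R E → L.CoHomAcyclic E) ∧
    IsKerOf L B

/-- Gorenstein flat module. -/
def IsGorensteinFlat (R : Type u) [CommRing R]
    (M : Type u) [AddCommGroup M] [Module R M] : Prop :=
  ∃ L : ModComplex R, L.Acyclic ∧ (∀ i, Module.Flat R (L.X i)) ∧
    (∀ (E : Type u) [AddCommGroup E] [Module R E],
      Module.Injective R E → L.TensorAcyclic E) ∧
    IsCokerOf L M

/-- `M` has projective dimension at most `n`. -/
def ProjDimLe (R : Type u) [CommRing R] :
    ℕ → ∀ (M : Type u) [AddCommGroup M] [Module R M], Prop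
  | 0, M, _, _ => Module.Projective R M
  | n + 1, M, _, _ =>
    ∃ (P : Type u) (_ : AddCommGroup P) (_ : Module R P) (f : P →ₗ[R] M),
      Module.Projective R P ∧ Function.Surjective f ∧
        ProjDimLe R n (LinearMap.ker f)

/-- `M` has flat dimension at most `n`. -/
def FlatDimLe (R : Type u) [CommRing R] :
    ℕ → ∀ (M : Type u) [AddCommGroup M] [Module R M], Prop
  | 0, M, _, _ => Module.Flat R M
  | n + 1, M, _, _ =>
    ∃ (F : Type u) (_ : AddCommGroup F) (_ : Module R F) (f : F →ₗ[R] M),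
      Module.Flat R F ∧ Function.Surjective f ∧
        FlatDimLe R n (LinearMap.ker f)

/-- `M` has Gorenstein projective dimension at most `n`. -/
def GProjDimLe (R : Type u) [CommRing R] :
    ℕ → ∀ (M : Type u) [AddCommGroup M] [Module R M], Prop
  | 0, M, _, _ => IsGorensteinProjective R M
  | n + 1, M, _, _ =>
    ∃ (P : Type u) (_ : AddCommGroup P) (_ : Module R P) (f : P →ₗ[R] M),
      IsGorensteinProjective R P ∧ Function.Surjective f ∧
        GProjDimLe R n (LinearMap.ker f)

/-- The projective dimension, as an element of `ℕ∞`. -/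
noncomputable def projDim (R : Type u) [CommRing R]
    (M : Type u) [AddCommGroup M] [Module R M] : ℕ∞ :=
  sInf {n : ℕ∞ | ∃ m : ℕ, n = m ∧ ProjDimLe R m M}

/-- The Gorenstein projective dimension, as an element of `ℕ∞`. -/
noncomputable def gProjDim (R : Type u) [CommRing R]
    (M : Type u) [AddCommGroup M] [Module R M] : ℕ∞ :=
  sInf {n : ℕ∞ | ∃ m : ℕ, n = m ∧ GProjDimLe R m M}


section Helpers
variable {R : Type u} [CommRing R]

/-- generic exactness transport along equivs -/
theorem exact_of_equiv {A B C A' B' C' : Type u}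
    [AddCommGroup A] [Module R A] [AddCommGroup B] [Module R B] [AddCommGroup C] [Module R C]
    [AddCommGroup A'] [Module R A'] [AddCommGroup B'] [Module R B'] [AddCommGroup C'] [Module R C']
    (eA : A' ≃ₗ[R] A) (eB : B' ≃ₗ[R] B) (eC : C' ≃ₗ[R] C)
    {f : A → B} {g : B → C} {f' : A' → B'} {g' : B' → C'}
    (hf : ∀ a, eB (f' a) = f (eA a)) (hg : ∀ b, eC (g' b) = g (eB b))
    (h : Function.Exact f g) : Function.Exact f' g' := by
  intro b'
  constructor
  · intro h0
    have : g (eB b') = 0 := by rw [← hg, h0, map_zero]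
    obtain ⟨a, ha⟩ := (h (eB b')).mp this
    exact ⟨eA.symm a, eB.injective (by rw [hf, LinearEquiv.apply_symm_apply, ha])⟩
  · rintro ⟨a', rfl⟩
    apply eC.injective
    rw [hg, map_zero, hf]
    exact h.apply_apply_eq_zero (eA a')

/-- Lemma A: `Hom(-, I)` into an injective preserves exactness (contravariantly). -/
theorem hom_exact {A B C I : Type u}
    [AddCommGroup A] [Module R A] [AddCommGroup B] [Module R B] [AddCommGroup C] [Module R C]
    [AddCommGroup I] [Module R I] (hI : Module.Injective R I)
    {f : A →ₗ[R] B} {g : B →ₗ[R] C} (h : Function.Exact f g) :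
    Function.Exact (fun φ : C →ₗ[R] I => φ.comp g) (fun φ : B →ₗ[R] I => φ.comp f) := by
  intro φ
  constructor
  · intro h0
    have hker : LinearMap.ker g ≤ LinearMap.ker φ := by
      rw [h.linearMap_ker_eq]
      rintro b ⟨a, rfl⟩
      simpa using congrFun (congrArg (fun (ψ : A →ₗ[R] I) => (ψ : A → I)) h0) a
    obtain ⟨ψ, hψ⟩ := hI.out (LinearMap.range g).subtype (Submodule.injective_subtype _)
      (((LinearMap.ker g).liftQ φ hker).comp (g.quotKerEquivRange.symm).toLinearMap)
    refine ⟨ψ, ?_⟩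
    ext b
    have h1 := hψ ⟨g b, ⟨b, rfl⟩⟩
    simp only [Submodule.coe_subtype, LinearMap.comp_apply] at h1
    rw [LinearMap.comp_apply, h1]
    have h2 : (g.quotKerEquivRange.symm) ⟨g b, ⟨b, rfl⟩⟩ = Submodule.Quotient.mk b := by
      apply g.quotKerEquivRange.injective
      rw [LinearEquiv.apply_symm_apply]
      ext
      exact (g.quotKerEquivRange_apply_mk b).symm
    simp [h2]
  · rintro ⟨ψ, rfl⟩
    ext a
    simp [h.apply_apply_eq_zero a]

/-- Lemma B: `Hom(P, I)` is injective when `P` is flat and `I` injective. -/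
theorem inj_hom {P I : Type u} [AddCommGroup P] [Module R P] [Module.Flat R P]
    [AddCommGroup I] [Module R I] (hI : Module.Injective R I) :
    Module.Injective R (P →ₗ[R] I) := by
  constructor
  intro X Y _ _ _ _ f hf g
  obtain ⟨h', hh'⟩ := hI.out (f.rTensor P)
    (Module.Flat.rTensor_preserves_injective_linearMap f hf) (TensorProduct.lift g)
  refine ⟨TensorProduct.curry h', fun x => ?_⟩
  ext p
  simpa using hh' (x ⊗ₜ p)

variable (E : Type u) [AddCommGroup E] [Module R E]

/-- The natural map `E ⊗ P → Hom(P*, E)`, `e ⊗ p ↦ (f ↦ f p • e)`. -/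
noncomputable def theta (P : Type u) [AddCommGroup P] [Module R P] :
    E ⊗[R] P →ₗ[R] (Module.Dual R P →ₗ[R] E) :=
  (dualTensorHom R (Module.Dual R P) E).comp
    ((TensorProduct.map (Module.Dual.eval R P) LinearMap.id).comp
      (TensorProduct.comm R E P).toLinearMap)

@[simp] theorem theta_tmul {P : Type u} [AddCommGroup P] [Module R P]
    (e : E) (p : P) (f : Module.Dual R P) :
    theta E P (e ⊗ₜ p) f = f p • e := by
  simp [theta]

theorem theta_natural {P Q : Type u} [AddCommGroup P] [Module R P]
    [AddCommGroup Q] [Module R Q] (g : P →ₗ[R] Q) :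
    (theta E Q).comp (g.lTensor E) =
      (g.dualMap.lcomp R E).comp (theta E P) := by
  apply TensorProduct.ext'
  intro e p
  ext f
  simp

theorem theta_bijective (P : Type u) [AddCommGroup P] [Module R P]
    [Module.Finite R P] [Module.Projective R P] :
    Function.Bijective (theta (R := R) E P) := by
  obtain ⟨n, π, hπ⟩ := Module.Finite.exists_fin' R P
  obtain ⟨σ, hσ⟩ := Module.projective_lifting_property π LinearMap.id hπ
  set F := Fin n → R with hF
  -- free case
  have hfree : Function.Bijective (theta (R := R) E F) := by
    have he : theta E F = (dualTensorHomEquiv R (Module.Dual R F) E).toLinearMap.comp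
        (((TensorProduct.congr (Module.evalEquiv R F) (LinearEquiv.refl R E)).toLinearMap).comp
          (TensorProduct.comm R E F).toLinearMap) := by
      apply TensorProduct.ext'
      intro e p
      rfl
    rw [he]
    exact (dualTensorHomEquiv R (Module.Dual R F) E).bijective.comp
      ((TensorProduct.congr (Module.evalEquiv R F) (LinearEquiv.refl R E)).bijective.comp
        (TensorProduct.comm R E F).bijective)
  have hid : (π.lTensor E).comp (σ.lTensor E) = LinearMap.id := by
    rw [← LinearMap.lTensor_comp, hσ, LinearMap.lTensor_id]
  have natσ := theta_natural E σ
  have natπ := theta_natural E π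
  constructor
  · intro x y hxy
    have h1 : theta E F (σ.lTensor E x) = theta E F (σ.lTensor E y) := by
      have hx := LinearMap.congr_fun natσ x
      have hy := LinearMap.congr_fun natσ y
      simp only [LinearMap.comp_apply] at hx hy
      rw [hx, hy, hxy]
    have h2 := hfree.injective h1
    have : (π.lTensor E) ((σ.lTensor E) x) = (π.lTensor E) ((σ.lTensor E) y) := by rw [h2]
    simpa [LinearMap.ext_iff] using
      (LinearMap.congr_fun hid x).symm.trans
        (this.trans (LinearMap.congr_fun hid y))
  · intro φ
    obtain ⟨y, hy⟩ := hfree.surjective ((σ.dualMap.lcomp R E) φ)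
    refine ⟨π.lTensor E y, ?_⟩
    have h1 := LinearMap.congr_fun natπ y
    simp only [LinearMap.comp_apply] at h1
    rw [h1, hy]
    -- (lcomp π.dualMap) ((lcomp σ.dualMap) φ) = φ
    ext f
    simp only [LinearMap.lcomp_apply, LinearMap.comp_apply, LinearMap.dualMap_apply]
    congr 1
    ext p
    simp only [LinearMap.dualMap_apply, LinearMap.comp_apply]
    rw [show π (σ p) = (π ∘ₗ σ) p from rfl, hσ]
    rfl

end Helpers

namespace ModComplex
variable {R : Type u} [CommRing R] (L : ModComplex R)

/-- Transport along an equality of indices. -/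
def xcast {a b : ℤ} (h : a = b) : L.X a ≃ₗ[R] L.X b := by
  subst h; exact LinearEquiv.refl R _

@[simp] theorem xcast_rfl_apply {a : ℤ} (h : a = a) (x : L.X a) : L.xcast h x = x := rfl

theorem xcast_xcast_apply {a b c : ℤ} (h1 : a = b) (h2 : b = c) (x : L.X a) :
    L.xcast h2 (L.xcast h1 x) = L.xcast (h1.trans h2) x := by subst h1; subst h2; rfl

theorem xcast_symm {a b : ℤ} (h : a = b) : (L.xcast h).symm = L.xcast h.symm := by
  subst h; rfl

theorem d_xcast_apply {a b : ℤ} (h : a = b) (h' : a + 1 = b + 1) (x : L.X (a + 1)) :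
    L.d b (L.xcast h' x) = L.xcast h (L.d a x) := by subst h; rfl

theorem d_xcast_d {a b : ℤ} (h : a = b + 1) (x : L.X (a + 1)) :
    L.d b (L.xcast h (L.d a x)) = 0 := by
  subst h
  have := LinearMap.congr_fun (L.dd b) x
  simpa using this

/-- The differential of the `I`-dual complex, as a map of the original modules. -/
noncomputable def delta (i : ℤ) : L.X (1 - i) →ₗ[R] L.X (1 - (i + 1)) :=
  ((L.xcast (by omega : -i = 1 - (i + 1))).toLinearMap.comp (L.d (-i))).comp
    (L.xcast (by omega : 1 - i = -i + 1)).toLinearMap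

theorem delta_apply (i : ℤ) (x : L.X (1 - i)) :
    L.delta i x = L.xcast (by omega) (L.d (-i) (L.xcast (by omega) x)) := rfl

theorem delta_delta (i : ℤ) (x : L.X (1 - i)) : L.delta (i + 1) (L.delta i x) = 0 := by
  rw [delta_apply, delta_apply, L.xcast_xcast_apply, L.d_xcast_d (by omega : -i = -(i+1)+1)]
  simp

variable (I : Type u) [AddCommGroup I] [Module R I]

/-- The `I`-dual complex, `(dual L I).X i = Hom(L.X (1 - i), I)`. -/
noncomputable def dual : ModComplex R where
  X i := L.X (1 - i) →ₗ[R] I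
  d i := (L.delta i).lcomp R I
  dd i := by
    ext φ x
    simp only [LinearMap.comp_apply, LinearMap.lcomp_apply, LinearMap.zero_apply]
    rw [L.delta_delta]
    simp

theorem dual_d_apply (i : ℤ) (φ : (L.dual I).X (i + 1)) :
    (L.dual I).d i φ = (φ : L.X (1 - (i+1)) →ₗ[R] I).comp (L.delta i) := rfl

theorem exact_delta (hL : L.Acyclic) (i : ℤ) :
    Function.Exact (L.delta i) (L.delta (i + 1)) := by
  refine exact_of_equiv (L.xcast (by omega : (1:ℤ) - i = -(i+1)+1+1))
    (L.xcast (by omega : (1:ℤ) - (i+1) = -(i+1)+1))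
    (L.xcast (by omega : (1:ℤ) - (i+1+1) = -(i+1))) ?_ ?_ (hL (-(i+1)))
  · intro a
    rw [delta_apply, L.xcast_xcast_apply,
      ← L.d_xcast_apply (by omega : -i = -(i+1)+1) (by omega), L.xcast_xcast_apply]
  · intro b
    rw [delta_apply, L.xcast_xcast_apply, L.xcast_rfl_apply]


end ModComplex

/-- If `G` is totally reflexive and `I` is injective, then `Hom_R(G, I)` is
Gorenstein injective. -/
theorem gorensteinInjective_hom_of_totallyReflexive {R : Type u} [CommRing R]
    (G I : Type u) [AddCommGroup G] [Module R G] [AddCommGroup I] [Module R I]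
    (hG : IsTotallyReflexive R G) (hI : Module.Injective R I) :
    IsGorensteinInjective R (G →ₗ[R] I) := by
  obtain ⟨L, ⟨hAc, hFG, hHomR⟩, p, hps, hpk⟩ := hG
  refine ⟨L.dual I, ?_, ?_, ?_, ?_⟩
  · -- acyclic
    intro i
    exact hom_exact hI (L.exact_delta hAc i)
  · -- injective objects
    intro i
    haveI := (hFG (1 - i)).2
    exact inj_hom hI
  · -- CoHomAcyclic
    intro E _ _ hE i
    haveI h1a := (hFG (1 - i)).1
    haveI h1b := (hFG (1 - i)).2
    haveI h2a := (hFG (1 - (i+1))).1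
    haveI h2b := (hFG (1 - (i+1))).2
    haveI h3a := (hFG (1 - (i+1+1))).1
    haveI h3b := (hFG (1 - (i+1+1))).2
    -- Step 1: exactness of the dual-of-dual over R transported to our indices
    have hH1 : Function.Exact (⇑((L.delta (i+1)).dualMap)) (⇑((L.delta i).dualMap)) := by
      refine exact_of_equiv
        (LinearEquiv.arrowCongr (L.xcast (by omega : (1:ℤ)-(i+1+1) = -(i+1))) (LinearEquiv.refl R R))
        (LinearEquiv.arrowCongr (L.xcast (by omega : (1:ℤ)-(i+1) = -(i+1)+1)) (LinearEquiv.refl R R))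
        (LinearEquiv.arrowCongr (L.xcast (by omega : (1:ℤ)-i = -(i+1)+1+1)) (LinearEquiv.refl R R))
        ?_ ?_ (hHomR (-(i+1)))
      · intro φ'
        ext x
        simp only [LinearEquiv.arrowCongr_apply, LinearEquiv.refl_apply,
          LinearMap.dualMap_apply, LinearMap.comp_apply]
        rw [L.xcast_symm, ModComplex.delta_apply, L.xcast_xcast_apply, L.xcast_rfl_apply,
          L.xcast_symm]
      · intro φ'
        ext x
        simp only [LinearEquiv.arrowCongr_apply, LinearEquiv.refl_apply,
          LinearMap.dualMap_apply, LinearMap.comp_apply]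
        rw [L.xcast_symm, ModComplex.delta_apply, L.xcast_xcast_apply,
          L.d_xcast_apply (by omega : -(i+1)+1 = -i) (by omega), L.xcast_xcast_apply,
          L.xcast_symm]
    -- Step 2: apply Hom(-, E)
    have hH2 : Function.Exact (⇑(LinearMap.lcomp R E (L.delta i).dualMap))
        (⇑(LinearMap.lcomp R E (L.delta (i+1)).dualMap)) := hom_exact hE hH1
    -- Step 3: apply Hom(-, I)
    have hH3 := hom_exact hI hH2
    -- Step 4: transport along theta and currying
    show Function.Exact
      (fun φ : E →ₗ[R] (L.X (1-(i+1+1)) →ₗ[R] I) => (LinearMap.lcomp R I (L.delta (i+1))).comp φ)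
      (fun φ : E →ₗ[R] (L.X (1-(i+1)) →ₗ[R] I) => (LinearMap.lcomp R I (L.delta i)).comp φ)
    refine exact_of_equiv
      ((TensorProduct.lift.equiv (RingHom.id R) E (L.X (1-(i+1+1))) I).trans
        (LinearEquiv.arrowCongr (LinearEquiv.ofBijective (theta (R:=R) E (L.X (1-(i+1+1))))
          (theta_bijective E _)) (LinearEquiv.refl R I)))
      ((TensorProduct.lift.equiv (RingHom.id R) E (L.X (1-(i+1))) I).trans
        (LinearEquiv.arrowCongr (LinearEquiv.ofBijective (theta (R:=R) E (L.X (1-(i+1))))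
          (theta_bijective E _)) (LinearEquiv.refl R I)))
      ((TensorProduct.lift.equiv (RingHom.id R) E (L.X (1-i)) I).trans
        (LinearEquiv.arrowCongr (LinearEquiv.ofBijective (theta (R:=R) E (L.X (1-i)))
          (theta_bijective E _)) (LinearEquiv.refl R I)))
      ?_ ?_ hH3
    · intro φ
      ext α
      obtain ⟨t, rfl⟩ := (theta_bijective E (L.X (1-(i+1)))).surjective α
      induction t using TensorProduct.induction_on with
      | zero => simp
      | add x y hx hy => simp only [map_add, LinearMap.add_apply] at hx hy ⊢; rw [hx, hy]
      | tmul e a =>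
        have hsy : ∀ (P : Type u) [AddCommGroup P] [Module R P]
            [Module.Finite R P] [Module.Projective R P] (z : E ⊗[R] P),
            (LinearEquiv.ofBijective (theta (R:=R) E P) (theta_bijective E P)).symm
              (theta (R:=R) E P z) = z := by
          intro P _ _ _ _ z
          rw [LinearEquiv.symm_apply_eq]
          rfl
        have hnat := LinearMap.congr_fun (theta_natural (R:=R) E (L.delta (i+1))) (e ⊗ₜ[R] a)
        simp only [LinearMap.comp_apply, LinearMap.lTensor_tmul] at hnat
        simp only [LinearEquiv.trans_apply, LinearEquiv.arrowCongr_apply, LinearEquiv.refl_apply,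
          LinearMap.comp_apply, LinearMap.lcomp_apply, hsy, ← hnat]
        simp [TensorProduct.lift.equiv_apply]
    · intro φ
      ext α
      obtain ⟨t, rfl⟩ := (theta_bijective E (L.X (1-i))).surjective α
      induction t using TensorProduct.induction_on with
      | zero => simp
      | add x y hx hy => simp only [map_add, LinearMap.add_apply] at hx hy ⊢; rw [hx, hy]
      | tmul e a =>
        have hsy : ∀ (P : Type u) [AddCommGroup P] [Module R P]
            [Module.Finite R P] [Module.Projective R P] (z : E ⊗[R] P),
            (LinearEquiv.ofBijective (theta (R:=R) E P) (theta_bijective E P)).symm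
              (theta (R:=R) E P z) = z := by
          intro P _ _ _ _ z
          rw [LinearEquiv.symm_apply_eq]
          rfl
        have hnat := LinearMap.congr_fun (theta_natural (R:=R) E (L.delta i)) (e ⊗ₜ[R] a)
        simp only [LinearMap.comp_apply, LinearMap.lTensor_tmul] at hnat
        simp only [LinearEquiv.trans_apply, LinearEquiv.arrowCongr_apply, LinearEquiv.refl_apply,
          LinearMap.comp_apply, LinearMap.lcomp_apply, hsy, ← hnat]
        simp [TensorProduct.lift.equiv_apply]
  · -- kernel is Hom(G, I)
    have key : ∀ z : L.X ((0:ℤ)+1),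
        L.delta 0 (L.xcast (by omega : (0:ℤ)+1 = 1-0) z) =
          L.xcast (by omega : (0:ℤ) = 1-(0+1)) (L.d 0 z) := by
      intro z
      rw [ModComplex.delta_apply, L.xcast_xcast_apply,
        L.d_xcast_apply (by omega : (0:ℤ) = -0) (by omega), L.xcast_xcast_apply]
    have key2 : ∀ x : L.X (1-(0:ℤ)),
        L.delta 0 x = L.xcast (by omega : (0:ℤ) = 1-(0+1))
          (L.d 0 (L.xcast (by omega : (1:ℤ)-0 = 0+1) x)) := by
      intro x
      conv_lhs => rw [show x = L.xcast (by omega : (0:ℤ)+1 = 1-0)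
        (L.xcast (by omega : (1:ℤ)-0 = 0+1) x) from by
          rw [L.xcast_xcast_apply, L.xcast_rfl_apply]]
      rw [key]
    show ∃ f : (G →ₗ[R] I) →ₗ[R] (L.X (1-(0+1:ℤ)) →ₗ[R] I), Function.Injective f ∧
      LinearMap.range f = LinearMap.ker (LinearMap.lcomp R I (L.delta 0))
    have h01 : (1:ℤ) - (0+1) = 0 := by omega
    refine ⟨LinearMap.lcomp R I (p.comp (L.xcast h01).toLinearMap), ?_, ?_⟩
    · intro φ₁ φ₂ hφ
      ext g
      obtain ⟨y, rfl⟩ := hps g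
      have := LinearMap.congr_fun hφ ((L.xcast h01).symm y)
      simpa [LinearEquiv.apply_symm_apply] using this
    · ext ψ
      simp only [LinearMap.mem_range, LinearMap.mem_ker, LinearMap.lcomp_apply]
      constructor
      · rintro ⟨φ, rfl⟩
        ext x
        simp only [LinearMap.comp_apply, LinearMap.lcomp_apply, LinearMap.zero_apply,
          LinearEquiv.coe_coe]
        rw [key2 x, L.xcast_xcast_apply, L.xcast_rfl_apply]
        have hmem : L.d 0 (L.xcast (by omega : (1:ℤ)-0 = 0+1) x) ∈ LinearMap.ker p := by
          rw [hpk]; exact ⟨_, rfl⟩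
        rw [LinearMap.mem_ker] at hmem
        rw [hmem, map_zero]
      · intro hψ
        set ψ0 : L.X 0 →ₗ[R] I := ψ.comp (L.xcast h01.symm).toLinearMap with hψ0
        have hker : LinearMap.ker p ≤ LinearMap.ker ψ0 := by
          rw [hpk]
          rintro y ⟨z, rfl⟩
          have h2 := LinearMap.congr_fun hψ (L.xcast (by omega : (0:ℤ)+1 = 1-0) z)
          rw [LinearMap.lcomp_apply, key] at h2
          simpa [ψ0] using h2
        set e := LinearMap.quotKerEquivOfSurjective p hps with he_def
        refine ⟨((LinearMap.ker p).liftQ ψ0 hker).comp e.symm.toLinearMap, ?_⟩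
        have hfac : ∀ y : L.X 0,
            (((LinearMap.ker p).liftQ ψ0 hker).comp e.symm.toLinearMap) (p y) = ψ0 y := by
          intro y
          have he : e.symm (p y) = Submodule.Quotient.mk y := by
            apply e.injective
            rw [LinearEquiv.apply_symm_apply]
            show p y = e (Submodule.Quotient.mk y)
            simp [he_def, LinearMap.quotKerEquivOfSurjective]
          rw [LinearMap.comp_apply]
          simp only [LinearEquiv.coe_coe]
          rw [he, Submodule.liftQ_apply]
        ext x
        simp only [LinearMap.lcomp_apply, LinearMap.comp_apply, LinearEquiv.coe_coe]
        have h3 := hfac ((L.xcast h01) x)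
        rw [LinearMap.comp_apply] at h3
        simp only [LinearEquiv.coe_coe] at h3
        rw [h3, hψ0, LinearMap.comp_apply]
        simp only [LinearEquiv.coe_coe]
        rw [L.xcast_xcast_apply, L.xcast_rfl_apply]
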